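/- Exactly one of the following systems is consistent: (1) there exists X ≻ 0 with A(X) = b; (2) there exists y ∈ R^m with A*(y) ⪰ 0, A*(y) ≠ 0, and b^T y = 0. -/

import Mathlib

open Matrix


private lemma trace_mul_vecMulVec' {n : ℕ} (A : Matrix (Fin n) (Fin n) ℝ) (v : Fin n → ℝ) :
    (A * vecMulVec v v).trace = v ⬝ᵥ A.mulVec v := by
  simp only [Matrix.trace, Matrix.diag, Matrix.mul_apply, vecMulVec_apply, dotProduct, mulVec,
    Finset.mul_sum]
  exact Finset.sum_congr rfl fun i _ => Finset.sum_congr rfl fun j _ => by ring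

private lemma qf_vecMulVec' {n : ℕ} (v x : Fin n → ℝ) :
    x ⬝ᵥ (vecMulVec v v).mulVec x = (v ⬝ᵥ x) * (v ⬝ᵥ x) := by
  simp only [dotProduct, mulVec, vecMulVec_apply, Finset.mul_sum, Finset.sum_mul]
  exact Finset.sum_congr rfl fun i _ => Finset.sum_congr rfl fun j _ => by ring

private lemma qf_transpose' {n : ℕ} (X : Matrix (Fin n) (Fin n) ℝ) (x : Fin n → ℝ) :
    x ⬝ᵥ Xᵀ.mulVec x = x ⬝ᵥ X.mulVec x := by
  rw [Matrix.dotProduct_mulVec, Matrix.vecMul_transpose, dotProduct_comm]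

private lemma qf_abs_le {n : ℕ} (D : Matrix (Fin n) (Fin n) ℝ) (u : Fin n → ℝ)
    (hu : ∀ k, |u k| ≤ 1) : |u ⬝ᵥ D.mulVec u| ≤ ∑ i, ∑ j, |D i j| := by
  simp only [dotProduct, mulVec]
  calc |∑ i, u i * ∑ j, D i j * u j| ≤ ∑ i, |u i * ∑ j, D i j * u j| :=
        Finset.abs_sum_le_sum_abs _ _
    _ ≤ ∑ i, ∑ j, |D i j| := by
        refine Finset.sum_le_sum fun i _ => ?_
        rw [abs_mul]
        calc |u i| * |∑ j, D i j * u j| ≤ 1 * ∑ j, |D i j| := by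
              refine mul_le_mul (hu i) ?_ (abs_nonneg _) zero_le_one
              calc |∑ j, D i j * u j| ≤ ∑ j, |D i j * u j| := Finset.abs_sum_le_sum_abs _ _
                _ ≤ ∑ j, |D i j| := Finset.sum_le_sum fun j _ => by
                    rw [abs_mul]
                    calc |D i j| * |u j| ≤ |D i j| * 1 :=
                          mul_le_mul_of_nonneg_left (hu j) (abs_nonneg _)
                      _ = |D i j| := mul_one _
          _ = ∑ j, |D i j| := one_mul _

private lemma dot_self_pos' {n : ℕ} {x : Fin n → ℝ} (hx : x ≠ 0) : 0 < x ⬝ᵥ x := by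
  rcases Function.ne_iff.1 hx with ⟨k, hk⟩
  have : (0:ℝ) < ∑ i, x i * x i := by
    refine Finset.sum_pos' (fun i _ => mul_self_nonneg _) ⟨k, Finset.mem_univ _, ?_⟩
    exact mul_self_pos.2 hk
  simpa [dotProduct] using this

private lemma isOpen_strictCone' {n : ℕ} :
    IsOpen {X : Matrix (Fin n) (Fin n) ℝ | ∀ x, x ≠ 0 → 0 < x ⬝ᵥ X.mulVec x} := by
  rcases Nat.eq_zero_or_pos n with hn | hn
  · subst hn
    convert isOpen_univ
    ext X
    simp only [Set.mem_setOf_eq, Set.mem_univ, iff_true]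
    intro x hx
    exact absurd (Subsingleton.elim x 0) hx
  rw [isOpen_iff_forall_mem_open]
  intro X hX
  haveI : Nonempty (Fin n) := ⟨⟨0, hn⟩⟩
  -- continuity of the quadratic form in x
  have cont : Continuous fun x : Fin n → ℝ => x ⬝ᵥ X.mulVec x := by
    simp only [dotProduct, mulVec]
    exact continuous_finset_sum _ fun i _ =>
      (continuous_apply i).mul (continuous_finset_sum _ fun j _ =>
        continuous_const.mul (continuous_apply j))
  have hKne : (Metric.sphere (0 : Fin n → ℝ) 1).Nonempty := by
    refine ⟨fun _ => 1, ?_⟩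
    simp [pi_norm_const]
  obtain ⟨z, hzK, hz⟩ := (isCompact_sphere (0 : Fin n → ℝ) 1).exists_isMinOn hKne
    cont.continuousOn
  have hznorm : ‖z‖ = 1 := mem_sphere_zero_iff_norm.1 hzK
  have hzne : z ≠ 0 := by
    intro h; rw [h, norm_zero] at hznorm; exact one_ne_zero hznorm.symm
  set ε : ℝ := z ⬝ᵥ X.mulVec z with hε_def
  have hε : 0 < ε := hX z hzne
  set δ : ℝ := ε / ((n : ℝ) * n + 1) with hδ_def
  have hNpos : (0:ℝ) < (n:ℝ) * n + 1 := by positivity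
  have hδpos : 0 < δ := div_pos hε hNpos
  have hnnδ : (n : ℝ) * n * δ < ε := by
    show (n : ℝ) * n * (ε / ((n : ℝ) * n + 1)) < ε
    rw [← mul_div_assoc, div_lt_iff₀ hNpos]
    nlinarith [hε]
  refine ⟨⋂ i, ⋂ j, (fun X' : Matrix (Fin n) (Fin n) ℝ => X' i j) ⁻¹' Metric.ball (X i j) δ,
    ?_, ?_, ?_⟩
  · -- subset
    intro X' hX'
    simp only [Set.mem_iInter, Set.mem_preimage, Metric.mem_ball] at hX'
    intro x hx
    set c : ℝ := ‖x‖ with hc_def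
    have hc : 0 < c := norm_pos_iff.2 hx
    set u : Fin n → ℝ := c⁻¹ • x with hu_def
    have hunorm : ‖u‖ = 1 := by
      rw [hu_def, norm_smul, norm_inv, norm_norm, inv_mul_cancel₀ hc.ne']
    have hxcu : c • u = x := by
      rw [hu_def, smul_smul, mul_inv_cancel₀ hc.ne', one_smul]
    have huk : ∀ k, |u k| ≤ 1 := by
      intro k
      have := norm_le_pi_norm u k
      rwa [hunorm, Real.norm_eq_abs] at this
    -- bound on perturbation
    have hbound : |u ⬝ᵥ (X' - X).mulVec u| ≤ (n:ℝ) * n * δ := by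
      refine (qf_abs_le _ _ huk).trans ?_
      calc ∑ i, ∑ j, |(X' - X) i j| ≤ ∑ _i : Fin n, ∑ _j : Fin n, δ := by
            refine Finset.sum_le_sum fun i _ => Finset.sum_le_sum fun j _ => ?_
            have := hX' i j
            rw [Real.dist_eq] at this
            simpa [Matrix.sub_apply] using this.le
        _ = (n:ℝ) * n * δ := by
            simp only [Finset.sum_const, Finset.card_univ, Fintype.card_fin, nsmul_eq_mul]
            ring
    have hmin : ε ≤ u ⬝ᵥ X.mulVec u := hz (mem_sphere_zero_iff_norm.2 hunorm)
    have hsplit : u ⬝ᵥ X'.mulVec u = u ⬝ᵥ X.mulVec u + u ⬝ᵥ (X' - X).mulVec u := by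
      rw [Matrix.sub_mulVec, dotProduct_sub]
      ring
    have hupos : 0 < u ⬝ᵥ X'.mulVec u := by
      have := neg_abs_le (u ⬝ᵥ (X' - X).mulVec u)
      rw [hsplit]; linarith
    have : x ⬝ᵥ X'.mulVec x = c * (c * (u ⬝ᵥ X'.mulVec u)) := by
      rw [← hxcu, smul_dotProduct, Matrix.mulVec_smul, dotProduct_smul]
      simp [smul_eq_mul]
    rw [this]
    positivity
  · exact isOpen_iInter_of_finite fun i => isOpen_iInter_of_finite fun j =>
      (Metric.isOpen_ball).preimage (continuous_apply_apply i j)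
  · simp only [Set.mem_iInter, Set.mem_preimage, Metric.mem_ball]
    intro i j
    simpa using hδpos


theorem stmt8 {n m : ℕ} (S : Fin m → Matrix (Fin n) (Fin n) ℝ)
    (hS : ∀ i, (S i).IsSymm) (b : Fin m → ℝ)
    (hne : {X : Matrix (Fin n) (Fin n) ℝ |
      X.PosSemidef ∧ ∀ i, (S i * X).trace = b i}.Nonempty) :
    Xor'
      (∃ X : Matrix (Fin n) (Fin n) ℝ, X.PosDef ∧ ∀ i, (S i * X).trace = b i)
      (∃ y : Fin m → ℝ, (∑ i, y i • S i).PosSemidef ∧ (∑ i, y i • S i) ≠ 0 ∧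
        ∑ i, b i * y i = 0) := by
  classical
  obtain ⟨X₀, hX₀psd, hX₀eq⟩ := hne
  by_cases h1 : ∃ X : Matrix (Fin n) (Fin n) ℝ, X.PosDef ∧ ∀ i, (S i * X).trace = b i
  · -- (1) holds; show (2) fails
    refine Or.inl ⟨h1, ?_⟩
    rintro ⟨y, hMpsd, hMne, hby⟩
    obtain ⟨X, hXpd, hXeq⟩ := h1
    have htr : ((∑ i, y i • S i) * X).trace = 0 := by
      rw [Finset.sum_mul, Matrix.trace_sum]
      calc ∑ i, ((y i • S i) * X).trace = ∑ i, b i * y i := by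
            refine Finset.sum_congr rfl fun i _ => ?_
            rw [smul_mul_assoc, trace_smul, hXeq i, smul_eq_mul, mul_comm]
        _ = 0 := hby
    obtain ⟨B, hB⟩ : ∃ B : Matrix (Fin n) (Fin n) ℝ, (∑ i, y i • S i) = Bᴴ * B := by
      open scoped MatrixOrder in
      obtain ⟨X, hX, -, hXX⟩ := CFC.exists_sqrt_of_isSelfAdjoint_of_quasispectrumRestricts
        hMpsd.isHermitian (QuasispectrumRestricts.nnreal_of_nonneg hMpsd.nonneg)
      exact ⟨X, by rw [← star_eq_conjTranspose, hX.star_eq]; exact hXX.symm⟩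
    have htr' : (B * X * Bᴴ).trace = 0 := by
      rw [trace_mul_cycle, ← hB, htr]
    have hdiag : ∀ i, (B * X * Bᴴ) i i = (fun j => B i j) ⬝ᵥ X.mulVec (fun j => B i j) := by
      intro i
      simp only [Matrix.mul_apply, conjTranspose_apply, star_trivial, dotProduct, mulVec,
        Finset.sum_mul, Finset.mul_sum]
      refine Finset.sum_congr rfl fun k _ => Finset.sum_congr rfl fun j _ => ?_
      have hsymm : X k j = X j k := by
        conv_lhs => rw [← hXpd.1]
        simp [conjTranspose_apply]
      rw [hsymm]; ring
    have hnonneg : ∀ i, 0 ≤ (B * X * Bᴴ) i i := by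
      intro i
      rw [hdiag i]
      have := hXpd.posSemidef.dotProduct_mulVec_nonneg (fun j => B i j)
      simpa using this
    have hzero : ∀ i ∈ Finset.univ, (B * X * Bᴴ) i i = 0 := by
      rw [← Finset.sum_eq_zero_iff_of_nonneg fun i _ => hnonneg i]
      exact htr'
    have hB0 : B = 0 := by
      ext i j
      by_contra hij
      have hrow : (fun j => B i j) ≠ 0 := by
        intro h
        exact hij (by simpa using congrFun h j)
      have hpos := hXpd.dotProduct_mulVec_pos hrow
      rw [star_trivial, ← hdiag i, hzero i (Finset.mem_univ i)] at hpos
      exact lt_irrefl 0 hpos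
    exact hMne (by rw [hB, hB0]; simp)
  · -- (1) fails; construct (2)
    refine Or.inr ⟨?_, h1⟩
    set s : Set (Matrix (Fin n) (Fin n) ℝ) :=
      {X | ∀ x, x ≠ 0 → 0 < x ⬝ᵥ X.mulVec x} with hs_def
    set t : Set (Matrix (Fin n) (Fin n) ℝ) :=
      {X | ∀ i, (S i * X).trace = b i} with ht_def
    have hs_conv : Convex ℝ s := by
      intro X hX Y hY a c ha hc hac
      intro x hx
      have h1 := hX x hx
      have h2 := hY x hx
      have : x ⬝ᵥ (a • X + c • Y).mulVec x
          = a * (x ⬝ᵥ X.mulVec x) + c * (x ⬝ᵥ Y.mulVec x) := by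
        rw [Matrix.add_mulVec, dotProduct_add, Matrix.smul_mulVec,
          Matrix.smul_mulVec, dotProduct_smul, dotProduct_smul]
        simp [smul_eq_mul]
      rw [this]
      rcases eq_or_lt_of_le ha with ha' | ha'
      · rw [← ha'] at hac ⊢; simp only [zero_mul, zero_add] at hac ⊢; rw [hac]; simpa using h2
      · nlinarith
    have ht_conv : Convex ℝ t := by
      intro X hX Y hY a c ha hc hac
      intro i
      rw [Matrix.mul_add, trace_add, Matrix.mul_smul, Matrix.mul_smul, trace_smul, trace_smul,
        hX i, hY i, smul_eq_mul, smul_eq_mul, ← add_mul, hac, one_mul]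
    have hdisj : Disjoint s t := by
      rw [Set.disjoint_left]
      intro X hXs hXt
      refine h1 ⟨(2⁻¹ : ℝ) • (X + Xᵀ), posDef_iff_dotProduct_mulVec.2 ⟨?_, ?_⟩, ?_⟩
      · -- Hermitian
        ext i j
        simp only [conjTranspose_apply, Matrix.smul_apply, Matrix.add_apply,
          Matrix.transpose_apply, star_trivial, smul_eq_mul]
        ring
      · intro x hx
        have hq := hXs x hx
        have : x ⬝ᵥ ((2⁻¹ : ℝ) • (X + Xᵀ)).mulVec x = 2⁻¹ * (x ⬝ᵥ X.mulVec x) +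
            2⁻¹ * (x ⬝ᵥ Xᵀ.mulVec x) := by
          rw [Matrix.smul_mulVec, dotProduct_smul, Matrix.add_mulVec, dotProduct_add]
          simp [smul_eq_mul, mul_add]
        rw [star_trivial, this, qf_transpose']
        linarith
      · intro i
        have h3 : (S i * Xᵀ).trace = (S i * X).trace := by
          rw [← trace_transpose, Matrix.transpose_mul, Matrix.transpose_transpose, (hS i).eq,
            trace_mul_comm]
        rw [Matrix.mul_smul, trace_smul, Matrix.mul_add, trace_add, h3, hXt i, smul_eq_mul]
        ring
    obtain ⟨f, u, hfs, hft⟩ := geometric_hahn_banach_open hs_conv isOpen_strictCone' ht_conv hdisj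
    -- scaled identities are in s
    have hsmul_one : ∀ ε : ℝ, 0 < ε → (ε • (1 : Matrix (Fin n) (Fin n) ℝ)) ∈ s := by
      intro ε hε x hx
      rw [Matrix.smul_mulVec, dotProduct_smul, Matrix.one_mulVec, smul_eq_mul]
      exact mul_pos hε (dot_self_pos' hx)
    have h1s : (1 : Matrix (Fin n) (Fin n) ℝ) ∈ s := by
      intro x hx
      rw [Matrix.one_mulVec]
      exact dot_self_pos' hx
    -- u ≥ 0
    have hu0 : 0 ≤ u := by
      by_contra hu
      push_neg at hu
      have hf1 : f 1 < u := hfs 1 h1s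
      have hf1neg : f 1 < 0 := hf1.trans hu
      set ε : ℝ := u / (2 * f 1) with hε_def
      have hεpos : 0 < ε := div_pos_iff.2 (Or.inr ⟨hu, by linarith⟩)
      have h2 := hfs _ (hsmul_one ε hεpos)
      rw [_root_.map_smul, smul_eq_mul] at h2
      have hne : f 1 ≠ 0 := ne_of_lt hf1neg
      have : ε * f 1 = u / 2 := by
        rw [hε_def, div_mul_eq_mul_div, mul_comm 2 (f 1), ← div_div, mul_div_assoc,
          div_self hne, mul_one]
      rw [this] at h2
      linarith
    -- f nonpositive on s
    have hcone : ∀ X ∈ s, f X ≤ 0 := by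
      intro X hXs
      by_contra hfX
      push_neg at hfX
      set lam : ℝ := (u + 1) / f X with hlam_def
      have hlam : 0 < lam := div_pos (by linarith) hfX
      have hmem : lam • X ∈ s := by
        intro x hx
        rw [Matrix.smul_mulVec, dotProduct_smul, smul_eq_mul]
        exact mul_pos hlam (hXs x hx)
      have h2 := hfs _ hmem
      rw [_root_.map_smul, smul_eq_mul, hlam_def] at h2
      rw [div_mul_cancel₀ _ hfX.ne'] at h2
      linarith
    -- f nonpositive on psd quadratic forms
    have hpsd_le : ∀ X : Matrix (Fin n) (Fin n) ℝ,
        (∀ x, 0 ≤ x ⬝ᵥ X.mulVec x) → f X ≤ 0 := by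
      intro X hX
      by_contra hfX
      push_neg at hfX
      have hf1 : f 1 ≤ 0 := hcone 1 h1s
      set ε : ℝ := f X / (2 * (-(f 1)) + 1) with hε_def
      have hden : (0:ℝ) < 2 * (-(f 1)) + 1 := by linarith
      have hεpos : 0 < ε := div_pos hfX hden
      have hmem : X + ε • 1 ∈ s := by
        intro x hx
        rw [Matrix.add_mulVec, dotProduct_add, Matrix.smul_mulVec, dotProduct_smul,
          Matrix.one_mulVec, smul_eq_mul]
        have := hX x
        have := dot_self_pos' hx
        nlinarith
      have h2 := hcone _ hmem
      rw [map_add, _root_.map_smul, smul_eq_mul] at h2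
      have hkey : ε * (-(f 1)) < f X := by
        have h3 : ε * (2 * (-(f 1)) + 1) = f X := by
          rw [hε_def, div_mul_cancel₀ _ hden.ne']
        nlinarith
      linarith
    -- X₀ ∈ t and f X₀ = 0, u = 0
    have hX₀t : X₀ ∈ t := hX₀eq
    have hfX₀le : f X₀ ≤ 0 := by
      refine hpsd_le X₀ fun x => ?_
      have := hX₀psd.dotProduct_mulVec_nonneg x
      simpa using this
    have huleq : u ≤ f X₀ := hft X₀ hX₀t
    have hu_eq : u = 0 := le_antisymm (huleq.trans hfX₀le) hu0
    have hfX₀ : f X₀ = 0 := le_antisymm hfX₀le (hu_eq ▸ huleq)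
    -- kernel property
    have hker : ∀ H : Matrix (Fin n) (Fin n) ℝ, (∀ i, (S i * H).trace = 0) → f H = 0 := by
      intro H hH
      have hmem : ∀ τ : ℝ, X₀ + τ • H ∈ t := by
        intro τ i
        rw [Matrix.mul_add, trace_add, Matrix.mul_smul, trace_smul, hX₀eq i, hH i, smul_zero,
          add_zero]
      have h2 : ∀ τ : ℝ, 0 ≤ τ * f H := by
        intro τ
        have := hft _ (hmem τ)
        rw [map_add, _root_.map_smul, smul_eq_mul, hfX₀, hu_eq] at this
        linarith
      have hp := h2 1
      have hm := h2 (-1)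
      rw [one_mul] at hp
      rw [neg_one_mul] at hm
      linarith
    -- span argument
    set L : Fin m → (Matrix (Fin n) (Fin n) ℝ →ₗ[ℝ] ℝ) := fun i =>
      { toFun := fun X => (S i * X).trace
        map_add' := fun X Y => by simp [Matrix.mul_add]
        map_smul' := fun c X => by simp [Matrix.mul_smul] } with hL_def
    have hspan : (f : Matrix (Fin n) (Fin n) ℝ →ₗ[ℝ] ℝ) ∈
        Submodule.span ℝ (Set.range L) := by
      refine mem_span_of_iInf_ker_le_ker ?_
      intro H hH
      rw [Submodule.mem_iInf] at hH
      rw [LinearMap.mem_ker]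
      refine hker H fun i => ?_
      have := hH i
      rwa [LinearMap.mem_ker] at this
    obtain ⟨c, hc⟩ := (Submodule.mem_span_range_iff_exists_fun ℝ).1 hspan
    have hc' : ∀ X : Matrix (Fin n) (Fin n) ℝ, (∑ i, c i * (S i * X).trace) = f X := by
      intro X
      have := LinearMap.congr_fun hc X
      simpa [hL_def, LinearMap.sum_apply, LinearMap.smul_apply, smul_eq_mul] using this
    refine ⟨fun i => -(c i), ?_, ?_, ?_⟩
    · -- PosSemidef
      refine posSemidef_iff_dotProduct_mulVec.2 ⟨?_, ?_⟩
      · ext a d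
        simp only [conjTranspose_apply, Matrix.sum_apply, Matrix.smul_apply, smul_eq_mul,
          star_trivial]
        exact Finset.sum_congr rfl fun i _ => by rw [(hS i).apply a d]
      · intro x
        rw [star_trivial]
        have hM : x ⬝ᵥ (∑ i, (-(c i)) • S i).mulVec x = -(f (vecMulVec x x)) := by
          rw [← hc' (vecMulVec x x), ← trace_mul_vecMulVec' (∑ i, (-(c i)) • S i) x,
            Finset.sum_mul, Matrix.trace_sum, ← Finset.sum_neg_distrib]
          exact Finset.sum_congr rfl fun i _ => by
            rw [smul_mul_assoc, trace_smul, smul_eq_mul]; ring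
        rw [hM]
        have : f (vecMulVec x x) ≤ 0 := by
          refine hpsd_le _ fun v => ?_
          rw [qf_vecMulVec']
          exact mul_self_nonneg _
        linarith
    · -- nonzero
      intro hM0
      have hf0 : ∀ X : Matrix (Fin n) (Fin n) ℝ, f X = 0 := by
        intro X
        have h2 : (∑ i, c i * (S i * X).trace) = ((∑ i, c i • S i) * X).trace := by
          rw [Finset.sum_mul, Matrix.trace_sum]
          exact Finset.sum_congr rfl fun i _ => by rw [smul_mul_assoc, trace_smul, smul_eq_mul]
        have h3 : (∑ i, c i • S i) = 0 := by
          have h4 : (∑ i, (-(c i)) • S i) = -(∑ i, c i • S i) := by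
            simp [neg_smul]
          rw [h4] at hM0
          exact neg_eq_zero.1 hM0
        rw [← hc' X, h2, h3, Matrix.zero_mul, trace_zero]
      have hf1 : f 1 < u := hfs 1 h1s
      rw [hf0 1, hu_eq] at hf1
      exact lt_irrefl 0 hf1
    · -- complementarity
      have h2 : (∑ i, c i * b i) = 0 := by
        have := hc' X₀
        rw [hfX₀] at this
        rw [← this]
        exact Finset.sum_congr rfl fun i _ => by rw [hX₀eq i]
      calc ∑ i, b i * (-(c i)) = -(∑ i, c i * b i) := by
            rw [← Finset.sum_neg_distrib]
            exact Finset.sum_congr rfl fun i _ => by ring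
        _ = 0 := by rw [h2, neg_zero]
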